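/- Let F: T → T' be a quotient functor between triangulated categories. Assume that N ⊆ T and N' ⊆ T' are triangulated subcategories such that F(N) ⊆ N'. Then the functor T/N → T'/N' between the Verdier quotient categories induced by F is a quotient functor. -/

import Mathlib

/-!
Formalization of results from X.-W. Chen, "Unifying two results of D. Orlov".
Since Mathlib does not yet provide coherent sheaves, bounded derived categories of
abelian categories, nor singularity categories, these are axiomatized below by
structures whose fields record the standard objects and their characterizing
properties; Verdier quotients are encoded via `Functor.IsLocalization` with respect
to the class of morphisms whose cone lies in the given subcategory.
-/

open CategoryTheory Limits Pretriangulated ZeroObject AlgebraicGeometry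

universe v₁ u₁ v₂ u₂ v₃ u₃ v₄ u₄ v u

namespace OrlovUnify

section Triangulated

variable (C : Type u) [Category.{v} C] [HasZeroObject C] [HasShift C ℤ] [Preadditive C]
  [∀ n : ℤ, (shiftFunctor C n).Additive] [Pretriangulated C]

/-- A (strictly full) triangulated subcategory of a pretriangulated category,
given by its set of objects: it contains the zero object and is closed under
shifts and extensions. -/
structure IsTriangulatedSubcategory (P : Set C) : Prop where
  zero : (0 : C) ∈ P
  shift : ∀ X ∈ P, ∀ n : ℤ, (X⟦n⟧ : C) ∈ P
  ext₂ : ∀ T ∈ distTriang C, T.obj₁ ∈ P → T.obj₃ ∈ P → T.obj₂ ∈ P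

/-- A thick triangulated subcategory: a triangulated subcategory which is moreover
closed under direct summands (equivalently, retracts). -/
structure IsThickSubcategory (P : Set C) extends IsTriangulatedSubcategory C P : Prop where
  retract : ∀ X Y : C, X ∈ P → (∃ (i : Y ⟶ X) (r : X ⟶ Y), i ≫ r = 𝟙 Y) → Y ∈ P

/-- `thickClosure C S` is the smallest thick triangulated subcategory of `C`
containing `S`, i.e. the thick subcategory *generated* by `S`, denoted `thick⟨S⟩`. -/
def thickClosure (S : Set C) : Set C :=
  ⋂₀ {P : Set C | IsThickSubcategory C P ∧ S ⊆ P}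

/-- The class of morphisms of `C` whose cone lies in `N`. The Verdier quotient `C/N`
is by definition the localization of `C` with respect to this class; hence a functor
`L : C ⥤ D` satisfying `L.IsLocalization (subW C N)` exhibits `D` as the Verdier
quotient `C/N`. -/
def subW (N : Set C) : MorphismProperty C := fun X Y f =>
  ∃ (Z : C) (g : Y ⟶ Z) (h : Z ⟶ X⟦(1 : ℤ)⟧),
    (Triangle.mk f g h ∈ distTriang C) ∧ Z ∈ N

variable {C} in
/-- The essential kernel of a functor: the objects sent to zero objects. -/
def kernelObjects {D : Type*} [Category D] (F : C ⥤ D) : Set C := {X : C | IsZero (F.obj X)}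

variable {C} in
/-- A triangle functor `F : C ⥤ D` is a *quotient functor* if the induced functor
`C/(Ker F) ⥤ D` from the Verdier quotient of `C` by the essential kernel of `F` is an
equivalence; equivalently, `F` is a localization with respect to the class of morphisms
whose cone is killed by `F`. -/
def IsQuotientFunctor {D : Type*} [Category D] (F : C ⥤ D) : Prop :=
  F.IsLocalization (subW C (kernelObjects F))

end Triangulated

end OrlovUnify

open OrlovUnify

section Auxiliary

open CategoryTheory.Triangulated

variable {C : Type u} [Category.{v} C] [HasZeroObject C] [HasShift C ℤ] [Preadditive C]
  [∀ n : ℤ, (shiftFunctor C n).Additive] [Pretriangulated C]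

/-- Bridge from `OrlovUnify.IsTriangulatedSubcategory` to Mathlib's
`Triangulated.Subcategory`. -/
lemma OrlovUnify.IsTriangulatedSubcategory.toSubcategory {N : Set C}
    (hN : IsTriangulatedSubcategory C N) : ObjectProperty.IsTriangulated (fun X : C => X ∈ N) where
  exists_zero := ⟨0, isZero_zero C, hN.zero⟩
  isStableUnderShiftBy a := ⟨fun X hX => hN.shift X hX a⟩
  ext₂' T hT h₁ h₃ := ObjectProperty.le_isoClosure _ _ (hN.ext₂ T hT h₁ h₃)

lemma subW_eq_W {N : Set C} (hN : IsTriangulatedSubcategory C N) :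
    subW C N = ObjectProperty.trW (fun X : C => X ∈ N) := by
  apply MorphismProperty.ext
  intro X Y f
  constructor
  · rintro ⟨Z, g, h, hT, hZ⟩; exact ⟨Z, g, h, hT, hZ⟩
  · rintro ⟨Z, g, h, hT, hZ⟩; exact ⟨Z, g, h, hT, hZ⟩

/-- The essential kernel of a triangulated functor is a triangulated subcategory. -/
lemma kernelObjects_isTriangulatedSubcategory {D : Type*} [Category D] [HasZeroObject D]
    [HasShift D ℤ] [Preadditive D] [∀ n : ℤ, (shiftFunctor D n).Additive] [Pretriangulated D]
    (F : C ⥤ D) [F.CommShift ℤ] [F.IsTriangulated] :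
    IsTriangulatedSubcategory C (kernelObjects F) where
  zero := F.map_isZero (isZero_zero C)
  shift X hX n :=
    IsZero.of_iso ((shiftFunctor D n).map_isZero hX) ((F.commShiftIso n).app X)
  ext₂ T hT h₁ h₃ :=
    Triangle.isZero₂_of_isZero₁₃ _ (F.map_distinguished T hT) h₁ h₃

/-- Objects of the subcategory are sent to zero objects by any functor inverting `subW C N`
and preserving the zero object. -/
lemma isZero_obj_of_mem {N : Set C} (hN : IsTriangulatedSubcategory C N)
    {Q : Type*} [Category Q] (L : C ⥤ Q)
    (hinv : (subW C N).IsInvertedBy L) (h0 : IsZero (L.obj (0 : C)))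
    {X : C} (hX : X ∈ N) : IsZero (L.obj X) := by
  have hw : subW C N (0 : X ⟶ (0 : C)) :=
    ⟨X⟦(1 : ℤ)⟧, 0, -(𝟙 X)⟦(1 : ℤ)⟧',
      rot_of_distTriang _ (contractible_distinguished X), hN.shift X hX 1⟩
  have : IsIso (L.map (0 : X ⟶ (0 : C))) := hinv _ hw
  exact IsZero.of_iso h0 (asIso (L.map (0 : X ⟶ (0 : C))))

/-- The class `subW C N` is stable under isomorphisms in the arrow category. -/
lemma subW_of_arrow_iso (N : Set C) {X₁ Y₁ X₂ Y₂ : C} {f₁ : X₁ ⟶ Y₁} {f₂ : X₂ ⟶ Y₂}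
    (A : Arrow.mk f₁ ≅ Arrow.mk f₂) (hf₁ : subW C N f₁) : subW C N f₂ := by
  obtain ⟨Z, g, h, hT, hZ⟩ := hf₁
  let l : X₁ ≅ X₂ := Arrow.leftFunc.mapIso A
  let r : Y₁ ≅ Y₂ := Arrow.rightFunc.mapIso A
  have w : f₁ ≫ r.hom = l.hom ≫ f₂ := A.hom.w.symm
  refine ⟨Z, r.inv ≫ g, h ≫ (l.hom)⟦(1 : ℤ)⟧', isomorphic_distinguished _ hT _ ?_, hZ⟩
  refine Triangle.isoMk _ _ l.symm r.symm (Iso.refl _) ?_ ?_ ?_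
  · change f₂ ≫ r.inv = l.inv ≫ f₁
    rw [← cancel_mono r.hom, Category.assoc, Category.assoc, r.inv_hom_id, Category.comp_id, w]
    simp
  · change (r.inv ≫ g) ≫ 𝟙 Z = r.inv ≫ g; simp
  · change (h ≫ l.hom⟦(1 : ℤ)⟧') ≫ l.inv⟦(1 : ℤ)⟧' = 𝟙 Z ≫ h
    simp only [Category.assoc, ← Functor.map_comp, l.hom_inv_id, Functor.map_id,
      Category.comp_id, Category.id_comp]
    simp

/-- Key lifting lemma: every distinguished triangle in the Verdier quotient
of `C` by `N` can be lifted to a morphism of `C` together with a cone. -/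
lemma exists_lift_of_distTriang {N : Set C} (hN : IsTriangulatedSubcategory C N)
    [IsTriangulated C]
    {Q : Type*} [Category Q] [HasZeroObject Q] [HasShift Q ℤ] [Preadditive Q]
    [∀ n : ℤ, (shiftFunctor Q n).Additive] [Pretriangulated Q]
    (L : C ⥤ Q) [L.CommShift ℤ] [L.IsTriangulated] [L.IsLocalization (subW C N)]
    {X' Y' Z' : Q} (f' : X' ⟶ Y') (g' : Y' ⟶ Z') (h' : Z' ⟶ X'⟦(1 : ℤ)⟧)
    (hT' : Triangle.mk f' g' h' ∈ distTriang Q) :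
    ∃ (X Y Z : C) (f : X ⟶ Y) (u : Y ⟶ Z) (v : Z ⟶ X⟦(1 : ℤ)⟧),
      Triangle.mk f u v ∈ (distTriang C) ∧
      Nonempty (Arrow.mk (L.map f) ≅ Arrow.mk f') ∧ Nonempty (L.obj Z ≅ Z') := by
  haveI : (subW C N).HasLeftCalculusOfFractions := by
    rw [subW_eq_W hN]; haveI := hN.toSubcategory; infer_instance
  haveI : L.EssSurj := Localization.essSurj L (subW C N)
  let eX : L.obj (L.objPreimage X') ≅ X' := L.objObjPreimageIso X'
  let eY : L.obj (L.objPreimage Y') ≅ Y' := L.objObjPreimageIso Y'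
  obtain ⟨φ, hφ⟩ := Localization.exists_leftFraction L (subW C N) (eX.hom ≫ f' ≫ eY.inv)
  obtain ⟨Z, u, v, hZ⟩ := Pretriangulated.distinguished_cocone_triangle φ.f
  haveI : IsIso (L.map φ.s) := Localization.inverts L (subW C N) φ.s φ.hs
  have hφ' : L.map φ.f ≫ inv (L.map φ.s) = eX.hom ≫ f' ≫ eY.inv := by
    rw [hφ]; simp [MorphismProperty.LeftFraction.map]
  have comm : L.map φ.f ≫ ((asIso (L.map φ.s)).symm ≪≫ eY).hom = eX.hom ≫ f' := by
    dsimp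
    rw [← Category.assoc, hφ']
    simp
  let eT := Pretriangulated.isoTriangleOfIso₁₂ (L.mapTriangle.obj (Triangle.mk φ.f u v))
    (Triangle.mk f' g' h') (L.map_distinguished _ hZ) hT' eX
    ((asIso (L.map φ.s)).symm ≪≫ eY) comm
  exact ⟨_, _, Z, φ.f, u, v, hZ,
    ⟨Arrow.isoMk eX ((asIso (L.map φ.s)).symm ≪≫ eY) comm.symm⟩,
    ⟨Triangle.π₃.mapIso eT⟩⟩

end Auxiliary

/-- **Lemma 2.1**. Let `F : T ⥤ T'` be a quotient functor between triangulated
categories, and let `N ⊆ T`, `N' ⊆ T'` be triangulated subcategories with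
`F(N) ⊆ N'`.  Then any functor `G : T/N ⥤ T'/N'` induced by `F` between the Verdier
quotient categories (i.e. making the square with the two Verdier quotient functors
commute up to isomorphism) is a quotient functor. -/
theorem induced_functor_isQuotientFunctor
    {T : Type u₁} [Category.{v₁} T] [HasZeroObject T] [HasShift T ℤ] [Preadditive T]
    [∀ n : ℤ, (shiftFunctor T n).Additive] [Pretriangulated T] [IsTriangulated T]
    {T' : Type u₂} [Category.{v₂} T'] [HasZeroObject T'] [HasShift T' ℤ] [Preadditive T']
    [∀ n : ℤ, (shiftFunctor T' n).Additive] [Pretriangulated T'] [IsTriangulated T']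
    (F : T ⥤ T') [F.CommShift ℤ] [F.IsTriangulated]
    (hF : IsQuotientFunctor F)
    {N : Set T} {N' : Set T'}
    (hN : IsTriangulatedSubcategory T N) (hN' : IsTriangulatedSubcategory T' N')
    (hFN : ∀ X ∈ N, F.obj X ∈ N')
    {Q₁ : Type u₃} [Category.{v₃} Q₁] [HasZeroObject Q₁] [HasShift Q₁ ℤ] [Preadditive Q₁]
    [∀ n : ℤ, (shiftFunctor Q₁ n).Additive] [Pretriangulated Q₁]
    {Q₂ : Type u₄} [Category.{v₄} Q₂] [HasZeroObject Q₂] [HasShift Q₂ ℤ] [Preadditive Q₂]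
    [∀ n : ℤ, (shiftFunctor Q₂ n).Additive] [Pretriangulated Q₂]
    (L₁ : T ⥤ Q₁) [L₁.CommShift ℤ] [L₁.IsTriangulated]
    (hL₁ : L₁.IsLocalization (subW T N))
    (L₂ : T' ⥤ Q₂) [L₂.CommShift ℤ] [L₂.IsTriangulated]
    (hL₂ : L₂.IsLocalization (subW T' N'))
    (G : Q₁ ⥤ Q₂) (e : L₁ ⋙ G ≅ F ⋙ L₂) :
    IsQuotientFunctor G := by
  haveI : F.IsLocalization (subW T (kernelObjects F)) := hF
  haveI := hL₁
  haveI := hL₂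
  -- the class of objects of `T` killed by `F ⋙ L₂`
  set M : Set T := kernelObjects (F ⋙ L₂) with hM
  have hKer : IsTriangulatedSubcategory T (kernelObjects F) :=
    kernelObjects_isTriangulatedSubcategory F
  -- objects of `N'` are killed by `L₂`
  have hL₂zero : ∀ X' ∈ N', IsZero (L₂.obj X') := fun X' hX' =>
    isZero_obj_of_mem hN' L₂ (Localization.inverts L₂ (subW T' N'))
      (L₂.map_isZero (isZero_zero T')) hX'
  -- (a) `subW T M` is inverted by `F ⋙ L₂`
  have ha : (subW T M).IsInvertedBy (F ⋙ L₂) := by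
    rintro X Y f ⟨Z, g, h, hT, hZ⟩
    exact (Triangle.isZero₃_iff_isIso₁ _ ((F ⋙ L₂).map_distinguished _ hT)).1 hZ
  -- (b) `subW T (kernelObjects F) ≤ subW T M`
  have hb : subW T (kernelObjects F) ≤ subW T M := by
    rintro X Y f ⟨Z, g, h, hT, hZ⟩
    exact ⟨Z, g, h, hT, L₂.map_isZero hZ⟩
  -- (c) `subW T' N' ≤ (subW T M).map F`
  have hc : subW T' N' ≤ (subW T M).map F := by
    rintro X' Y' f' ⟨Z', g', h', hT', hZ'⟩
    obtain ⟨X, Y, Z, f, u, v, hTr, ⟨A⟩, ⟨eZ⟩⟩ :=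
      exists_lift_of_distTriang hKer F f' g' h' hT'
    exact ⟨X, Y, f, ⟨Z, u, v, hTr,
      IsZero.of_iso (hL₂zero Z' hZ') (L₂.mapIso eZ)⟩, ⟨A⟩⟩
  -- `F ⋙ L₂` is a localization with respect to `subW T M`
  have step1 : (F ⋙ L₂).IsLocalization (subW T M) :=
    Functor.IsLocalization.comp F L₂ (subW T (kernelObjects F)) (subW T' N')
      (subW T M) ha hb hc
  -- hence so is `L₁ ⋙ G`, via the isomorphism `e`
  haveI step2 : (L₁ ⋙ G).IsLocalization (subW T M) := by
    haveI := step1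
    exact Functor.IsLocalization.of_iso (subW T M) e.symm
  -- `subW T N ≤ subW T M`
  have h1 : subW T N ≤ subW T M := by
    rintro X Y f ⟨Z, g, h, hT, hZ⟩
    exact ⟨Z, g, h, hT, hL₂zero (F.obj Z) (hFN Z hZ)⟩
  -- the essential kernel class of `G` in `Q₁` is the image of `subW T M`
  have hmap : subW Q₁ (kernelObjects G) = (subW T M).map L₁ := by
    apply MorphismProperty.ext
    intro X' Y' f'
    constructor
    · rintro ⟨Z', g', h', hT', hZ'⟩
      obtain ⟨X, Y, Z, f, u, v, hTr, ⟨A⟩, ⟨eZ⟩⟩ :=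
        exists_lift_of_distTriang hN L₁ f' g' h' hT'
      refine ⟨X, Y, f, ⟨Z, u, v, hTr, ?_⟩, ⟨A⟩⟩
      have hGLZ : IsZero (G.obj (L₁.obj Z)) := IsZero.of_iso hZ' (G.mapIso eZ)
      exact IsZero.of_iso hGLZ ((e.app Z).symm)
    · rintro ⟨X, Y, f, ⟨Z, u, v, hTr, hZ⟩, ⟨A⟩⟩
      have hmem : subW Q₁ (kernelObjects G) (L₁.map f) := by
        refine ⟨L₁.obj Z, L₁.map u,
          L₁.map v ≫ (L₁.commShiftIso (1 : ℤ)).hom.app X,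
          L₁.map_distinguished _ hTr, ?_⟩
        exact IsZero.of_iso hZ (e.app Z)
      exact subW_of_arrow_iso _ A hmem
  -- conclude by the cancellation property of localization functors
  exact Functor.IsLocalization.of_comp L₁ G (subW T N)
    (subW Q₁ (kernelObjects G)) (subW T M) h1 hmap
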